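/- Let H : [t₀,ϑ₀]×ℝⁿ×ℝⁿ → ℝ satisfy conditions H1–H3 with constant Υ > 0. Then there exist a positive integer m, nonempty compact sets P, Q ⊆ ℝ^m, and a function f : [t₀,ϑ₀]×ℝⁿ×P×Q → ℝⁿ satisfying conditions F1–F3 such that for every (t,x,s) ∈ [t₀,ϑ₀]×ℝⁿ×ℝⁿ one has H(t,x,s) = max_{v∈Q} min_{u∈P} ⟨s, f(t,x,u,v)⟩ (in particular the indicated maxima and minima are attained). -/

import Mathlib

open Set Filter Metric
open scoped RealInnerProductSpace

noncomputable section

abbrev Eu (n : ℕ) := EuclideanSpace ℝ (Fin n)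

/-- ω belongs to the class Ω: even, nonnegative, subadditive, and ω(δ) → 0 as δ → 0. -/
def MemOmega (ω : ℝ → ℝ) : Prop :=
  (∀ δ, 0 ≤ ω δ) ∧ (∀ δ, ω (-δ) = ω δ) ∧
  (∀ δ₁ δ₂, ω (δ₁ + δ₂) ≤ ω δ₁ + ω δ₂) ∧
  Tendsto ω (nhds 0) (nhds 0)

/-- Conditions H1–H3 with constant Υ for a Hamiltonian H on [t₀,ϑ₀]×ℝⁿ×ℝⁿ. -/
def SatisfiesH (t₀ ϑ₀ : ℝ) (n : ℕ) (Υ : ℝ) (H : ℝ → Eu n → Eu n → ℝ) : Prop :=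
  (∀ t ∈ Icc t₀ ϑ₀, ∀ x s : Eu n, |H t x s| ≤ Υ * ‖s‖ * (1 + ‖x‖)) ∧
  (∀ A : Set (Eu n), Bornology.IsBounded A →
    ∃ ωA : ℝ → ℝ, ∃ LA : ℝ, MemOmega ωA ∧ 0 < LA ∧
      ∀ R : ℝ, 0 < R → ∀ t' ∈ Icc t₀ ϑ₀, ∀ t'' ∈ Icc t₀ ϑ₀,
        ∀ x' ∈ A, ∀ x'' ∈ A, ∀ s' s'' : Eu n, ‖s'‖ ≤ R → ‖s''‖ ≤ R →
          |H t' x' s' - H t'' x'' s''| ≤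
            ωA (t' - t'') + LA * R * ‖x' - x''‖ +
              Υ * (1 + min ‖x'‖ ‖x''‖) * ‖s' - s''‖) ∧
  (∀ t ∈ Icc t₀ ϑ₀, ∀ x s : Eu n, ∀ α : ℝ, 0 ≤ α → H t x (α • s) = α * H t x s)

/-- Conditions F1–F3 for a game dynamics f on [t₀,ϑ₀]×ℝⁿ×P×Q. -/
def SatisfiesF (t₀ ϑ₀ : ℝ) (n m : ℕ) (P Q : Set (Eu m))
    (f : ℝ → Eu n → Eu m → Eu m → Eu n) : Prop :=
  ContinuousOn (fun p : ℝ × Eu n × Eu m × Eu m => f p.1 p.2.1 p.2.2.1 p.2.2.2)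
    (Icc t₀ ϑ₀ ×ˢ (univ : Set (Eu n)) ×ˢ P ×ˢ Q) ∧
  (∀ A : Set (Eu n), Bornology.IsBounded A → ∃ K : ℝ, 0 < K ∧
    ∀ t ∈ Icc t₀ ϑ₀, ∀ x' ∈ A, ∀ x'' ∈ A, ∀ u ∈ P, ∀ v ∈ Q,
      ‖f t x' u v - f t x'' u v‖ ≤ K * ‖x' - x''‖) ∧
  (∃ Λ : ℝ, 0 < Λ ∧ ∀ t ∈ Icc t₀ ϑ₀, ∀ x : Eu n, ∀ u ∈ P, ∀ v ∈ Q,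
    ‖f t x u v‖ ≤ Λ * (1 + ‖x‖))

def pE (n : ℕ) : Eu (n+1) →ₗ[ℝ] Eu n where
  toFun v := WithLp.toLp 2 (fun i => v (Fin.castSucc i))
  map_add' u v := rfl
  map_smul' c v := rfl

@[simp] lemma pE_apply (n : ℕ) (v : Eu (n+1)) (i : Fin n) : (pE n v) i = v i.castSucc := rfl

def iE (n : ℕ) : Eu n →ₗ[ℝ] Eu (n+1) where
  toFun y := WithLp.toLp 2 (Fin.snoc (α := fun _ => ℝ) y 0)
  map_add' u v := by
    ext i
    induction i using Fin.lastCases with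
    | last => simp
    | cast j => simp [Fin.snoc_castSucc]
  map_smul' c v := by
    ext i
    induction i using Fin.lastCases with
    | last => simp
    | cast j => simp [Fin.snoc_castSucc]

@[simp] lemma iE_apply (n : ℕ) (y : Eu n) (i : Fin (n+1)) :
    (iE n y) i = Fin.snoc (α := fun _ => ℝ) y 0 i := rfl

lemma pE_iE (n : ℕ) (y : Eu n) : pE n (iE n y) = y := by
  ext i; simp [pE_apply, iE_apply, Fin.snoc_castSucc]

lemma iE_last (n : ℕ) (y : Eu n) : iE n y (Fin.last n) = 0 := by
  simp [iE_apply]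

lemma norm_iE (n : ℕ) (y : Eu n) : ‖iE n y‖ = ‖y‖ := by
  rw [EuclideanSpace.norm_eq, EuclideanSpace.norm_eq]
  congr 1
  rw [Fin.sum_univ_castSucc]
  simp [iE_apply, Fin.snoc_castSucc]

lemma norm_pE_le (n : ℕ) (u : Eu (n+1)) : ‖pE n u‖ ≤ ‖u‖ := by
  rw [EuclideanSpace.norm_eq, EuclideanSpace.norm_eq]
  apply Real.sqrt_le_sqrt
  rw [Fin.sum_univ_castSucc]
  have : (0:ℝ) ≤ ‖u (Fin.last n)‖ ^ 2 := sq_nonneg _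
  simp only [pE_apply, LinearMap.coe_mk, AddHom.coe_mk, PiLp.toLp_apply]
  linarith

lemma pE_single_last (n : ℕ) (c : ℝ) :
    pE n (EuclideanSpace.single (Fin.last n) c) = 0 := by
  ext i
  simp [pE_apply, EuclideanSpace.single_apply, (Fin.castSucc_lt_last i).ne]

lemma single_last_last (n : ℕ) (c : ℝ) :
    (EuclideanSpace.single (Fin.last n) c) (Fin.last n) = c := by
  simp [EuclideanSpace.single_apply]

lemma decomp (n : ℕ) (u : Eu (n+1)) :
    u = iE n (pE n u) + EuclideanSpace.single (Fin.last n) (u (Fin.last n)) := by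
  ext i
  induction i using Fin.lastCases with
  | last =>
    have h1 : (iE n (pE n u) + EuclideanSpace.single (Fin.last n) (u (Fin.last n))) (Fin.last n)
        = iE n (pE n u) (Fin.last n) + (EuclideanSpace.single (Fin.last n) (u (Fin.last n))) (Fin.last n) := rfl
    rw [h1, iE_last, single_last_last, zero_add]
  | cast j =>
    have h1 : (iE n (pE n u) + EuclideanSpace.single (Fin.last n) (u (Fin.last n))) j.castSucc
        = iE n (pE n u) j.castSucc + (EuclideanSpace.single (Fin.last n) (u (Fin.last n))) j.castSucc := rfl
    rw [h1]
    simp [iE_apply, pE_apply, Fin.snoc_castSucc, EuclideanSpace.single_apply, (Fin.castSucc_lt_last j).ne]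

lemma cont_pE (n : ℕ) : Continuous fun v => pE n v :=
  (pE n).continuous_of_finiteDimensional

lemma cont_iE (n : ℕ) : Continuous fun v => iE n v :=
  (iE n).continuous_of_finiteDimensional

def lastE (n : ℕ) : Eu (n+1) →ₗ[ℝ] ℝ where
  toFun u := u (Fin.last n)
  map_add' u v := rfl
  map_smul' c v := rfl

lemma cont_last (n : ℕ) : Continuous fun u : Eu (n+1) => u (Fin.last n) :=
  (lastE n).continuous_of_finiteDimensional



def Pset (n : ℕ) : Set (Eu (n+1)) :=
  {u | ‖pE n u‖ ≤ 1 ∧ 0 ≤ u (Fin.last n) ∧ u (Fin.last n) ≤ 1}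

def Qset (n : ℕ) : Set (Eu (n+1)) := iE n '' sphere 0 1

def fdyn (n : ℕ) (Υ : ℝ) (H : ℝ → Eu n → Eu n → ℝ) (t : ℝ) (x : Eu n)
    (u v : Eu (n+1)) : Eu n :=
  (H t x (pE n v) + 2 * (Υ * (1 + ‖x‖)) * (u (Fin.last n))) • (pE n v)
  + (Υ * (1 + ‖x‖)) • (pE n u - ⟪pE n u, pE n v⟫ • pE n v)

lemma fdyn_inner (n : ℕ) (Υ : ℝ) (H : ℝ → Eu n → Eu n → ℝ) (t : ℝ) (x : Eu n)
    (u : Eu (n+1)) (w s : Eu n) :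
    ⟪s, fdyn n Υ H t x u (iE n w)⟫
      = (H t x w + 2 * (Υ * (1 + ‖x‖)) * u (Fin.last n)) * ⟪s, w⟫
        + (Υ * (1 + ‖x‖)) * (⟪s, pE n u⟫ - ⟪pE n u, w⟫ * ⟪s, w⟫) := by
  simp only [fdyn, pE_iE, inner_add_right, inner_sub_right, real_inner_smul_right]

lemma zero_mem_P (n : ℕ) : (0 : Eu (n+1)) ∈ Pset n := by
  have h0 : (0 : Eu (n+1)) (Fin.last n) = 0 := rfl
  refine ⟨by simp, by simp [h0], by simp [h0]⟩

lemma isCompact_P (n : ℕ) : IsCompact (Pset n) := by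
  apply IsCompact.of_isClosed_subset (isCompact_closedBall (0 : Eu (n+1)) 2)
  · have h1 : IsClosed {u : Eu (n+1) | ‖pE n u‖ ≤ 1} :=
      isClosed_le ((cont_pE n).norm) continuous_const
    have h2 : IsClosed {u : Eu (n+1) | 0 ≤ u (Fin.last n)} :=
      isClosed_le continuous_const (cont_last n)
    have h3 : IsClosed {u : Eu (n+1) | u (Fin.last n) ≤ 1} :=
      isClosed_le (cont_last n) continuous_const
    have : Pset n = {u | ‖pE n u‖ ≤ 1} ∩ ({u | 0 ≤ u (Fin.last n)} ∩ {u | u (Fin.last n) ≤ 1}) := by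
      ext u; simp [Pset, and_assoc]
    rw [this]; exact h1.inter (h2.inter h3)
  · intro u hu
    obtain ⟨h1, h2, h3⟩ := hu
    rw [mem_closedBall, dist_zero_right]
    conv_lhs => rw [decomp n u]
    calc ‖iE n (pE n u) + EuclideanSpace.single (Fin.last n) (u (Fin.last n))‖
        ≤ ‖iE n (pE n u)‖ + ‖EuclideanSpace.single (Fin.last n) (u (Fin.last n))‖ := norm_add_le _ _
      _ ≤ 1 + 1 := by
          rw [norm_iE, EuclideanSpace.norm_single]
          exact add_le_add h1 (by rw [Real.norm_eq_abs, abs_of_nonneg h2]; exact h3)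
      _ = 2 := by norm_num

lemma isCompact_Q (n : ℕ) : IsCompact (Qset n) :=
  (isCompact_sphere 0 1).image (cont_iE n)

lemma Q_nonempty (n : ℕ) (hn : 1 ≤ n) : (Qset n).Nonempty := by
  refine ⟨iE n (EuclideanSpace.single (⟨0, hn⟩ : Fin n) 1), ?_⟩
  exact ⟨_, by simp [EuclideanSpace.norm_single], rfl⟩


lemma omega_zero (ω : ℝ → ℝ) (hω : MemOmega ω) : ω 0 = 0 := by
  obtain ⟨h0, he, hsub, hlim⟩ := hω
  have h2 : ∀ δ, ω 0 ≤ 2 * ω δ := by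
    intro δ
    have := hsub δ (-δ)
    rw [add_neg_cancel, he δ] at this
    linarith
  have : ω 0 / 2 ≤ 0 :=
    ge_of_tendsto hlim (Eventually.of_forall fun δ => by linarith [h2 δ])
  linarith [h0 0]

section Hlem
variable (t₀ ϑ₀ : ℝ) (n : ℕ) (Υ : ℝ) (H : ℝ → Eu n → Eu n → ℝ)
variable (hH2 : ∀ A : Set (Eu n), Bornology.IsBounded A →
    ∃ ωA : ℝ → ℝ, ∃ LA : ℝ, MemOmega ωA ∧ 0 < LA ∧
      ∀ R : ℝ, 0 < R → ∀ t' ∈ Icc t₀ ϑ₀, ∀ t'' ∈ Icc t₀ ϑ₀,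
        ∀ x' ∈ A, ∀ x'' ∈ A, ∀ s' s'' : Eu n, ‖s'‖ ≤ R → ‖s''‖ ≤ R →
          |H t' x' s' - H t'' x'' s''| ≤
            ωA (t' - t'') + LA * R * ‖x' - x''‖ +
              Υ * (1 + min ‖x'‖ ‖x''‖) * ‖s' - s''‖)

include hH2

lemma H_lip (hΥ : 0 < Υ) : ∀ t ∈ Icc t₀ ϑ₀, ∀ (x s s' : Eu n),
    |H t x s - H t x s'| ≤ Υ * (1 + ‖x‖) * ‖s - s'‖ := by
  intro t htt x s s'
  obtain ⟨ω, L, hω, hL, hb⟩ := hH2 {x} Bornology.isBounded_singleton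
  have hR : (0:ℝ) < max ‖s‖ ‖s'‖ + 1 := by positivity
  have := hb (max ‖s‖ ‖s'‖ + 1) hR t htt t htt x rfl x rfl s s'
    (by linarith [le_max_left ‖s‖ ‖s'‖]) (by linarith [le_max_right ‖s‖ ‖s'‖])
  rw [sub_self, omega_zero ω hω, sub_self, norm_zero, min_self] at this
  linarith

lemma H_cont (hΥ : 0 < Υ) : ContinuousOn (fun q : ℝ × Eu n × Eu n => H q.1 q.2.1 q.2.2)
    ((Icc t₀ ϑ₀) ×ˢ (univ : Set (Eu n)) ×ˢ (univ : Set (Eu n))) := by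
  rintro ⟨t₁, x₁, s₁⟩ hq₀
  obtain ⟨ω, L, hω, hL, hb⟩ := hH2 (closedBall x₁ 1) isBounded_closedBall
  set S := (Icc t₀ ϑ₀) ×ˢ (univ : Set (Eu n)) ×ˢ (univ : Set (Eu n)) with hS
  have ht₁ : t₁ ∈ Icc t₀ ϑ₀ := hq₀.1
  set B : ℝ × Eu n × Eu n → ℝ := fun q =>
    ω (q.1 - t₁) + L * (‖s₁‖ + 1) * ‖q.2.1 - x₁‖ + Υ * (2 + ‖x₁‖) * ‖q.2.2 - s₁‖ with hB
  -- eventual bound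
  have hev : ∀ᶠ q in nhdsWithin (t₁, x₁, s₁) S,
      dist (H q.1 q.2.1 q.2.2) (H t₁ x₁ s₁) ≤ B q := by
    have hx : Tendsto (fun q : ℝ × Eu n × Eu n => q.2.1) (nhds (t₁, x₁, s₁)) (nhds x₁) :=
      (continuous_fst.comp continuous_snd).tendsto _
    have hs : Tendsto (fun q : ℝ × Eu n × Eu n => q.2.2) (nhds (t₁, x₁, s₁)) (nhds s₁) :=
      (continuous_snd.comp continuous_snd).tendsto _
    have h1 : ∀ᶠ q in nhds (t₁, x₁, s₁), dist (q.2.1) x₁ < 1 := Metric.tendsto_nhds.mp hx 1 one_pos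
    have h2 : ∀ᶠ q in nhds (t₁, x₁, s₁), dist (q.2.2) s₁ < 1 := Metric.tendsto_nhds.mp hs 1 one_pos
    filter_upwards [eventually_nhdsWithin_of_eventually_nhds h1,
      eventually_nhdsWithin_of_eventually_nhds h2, self_mem_nhdsWithin] with q hq1 hq2 hqS
    have hts : q.1 ∈ Icc t₀ ϑ₀ := hqS.1
    have hx' : q.2.1 ∈ closedBall x₁ 1 := le_of_lt hq1
    have hx₁ : x₁ ∈ closedBall x₁ 1 := mem_closedBall_self one_pos.le
    have hns : ‖q.2.2‖ ≤ ‖s₁‖ + 1 := by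
      have := norm_sub_norm_le (q.2.2) s₁
      rw [← dist_eq_norm] at this
      linarith
    have hns₁ : ‖s₁‖ ≤ ‖s₁‖ + 1 := by linarith
    have hRpos : (0:ℝ) < ‖s₁‖ + 1 := by positivity
    have key := hb (‖s₁‖ + 1) hRpos q.1 hts t₁ ht₁ q.2.1 hx' x₁ hx₁ q.2.2 s₁ hns hns₁
    rw [Real.dist_eq]
    refine key.trans ?_
    have hmin : min ‖q.2.1‖ ‖x₁‖ ≤ ‖x₁‖ := min_le_right _ _
    have : Υ * (1 + min ‖q.2.1‖ ‖x₁‖) * ‖q.2.2 - s₁‖ ≤ Υ * (2 + ‖x₁‖) * ‖q.2.2 - s₁‖ := by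
      apply mul_le_mul_of_nonneg_right _ (norm_nonneg _)
      apply mul_le_mul_of_nonneg_left _ hΥ.le
      linarith
    simp only [hB]
    exact add_le_add le_rfl this
  -- B tends to 0
  have hB0 : Tendsto B (nhdsWithin (t₁, x₁, s₁) S) (nhds 0) := by
    have hc1 : Tendsto (fun q : ℝ × Eu n × Eu n => ω (q.1 - t₁))
        (nhdsWithin (t₁, x₁, s₁) S) (nhds 0) := by
      apply hω.2.2.2.comp
      have : Tendsto (fun q : ℝ × Eu n × Eu n => q.1 - t₁) (nhds (t₁, x₁, s₁)) (nhds 0) := by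
        have hc : Continuous (fun q : ℝ × Eu n × Eu n => q.1 - t₁) :=
          continuous_fst.sub continuous_const
        have h := hc.tendsto (t₁, x₁, s₁)
        simpa using h
      exact this.mono_left nhdsWithin_le_nhds
    have hc2 : Tendsto (fun q : ℝ × Eu n × Eu n => L * (‖s₁‖ + 1) * ‖q.2.1 - x₁‖)
        (nhdsWithin (t₁, x₁, s₁) S) (nhds 0) := by
      have : Tendsto (fun q : ℝ × Eu n × Eu n => L * (‖s₁‖ + 1) * ‖q.2.1 - x₁‖)
          (nhds (t₁, x₁, s₁)) (nhds (L * (‖s₁‖ + 1) * ‖x₁ - x₁‖)) :=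
        (continuous_const.mul (((continuous_fst.comp continuous_snd).sub
          continuous_const).norm)).tendsto _
      simp only [sub_self, norm_zero, mul_zero] at this
      exact this.mono_left nhdsWithin_le_nhds
    have hc3 : Tendsto (fun q : ℝ × Eu n × Eu n => Υ * (2 + ‖x₁‖) * ‖q.2.2 - s₁‖)
        (nhdsWithin (t₁, x₁, s₁) S) (nhds 0) := by
      have : Tendsto (fun q : ℝ × Eu n × Eu n => Υ * (2 + ‖x₁‖) * ‖q.2.2 - s₁‖)
          (nhds (t₁, x₁, s₁)) (nhds (Υ * (2 + ‖x₁‖) * ‖s₁ - s₁‖)) :=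
        (continuous_const.mul (((continuous_snd.comp continuous_snd).sub
          continuous_const).norm)).tendsto _
      simp only [sub_self, norm_zero, mul_zero] at this
      exact this.mono_left nhdsWithin_le_nhds
    have := (hc1.add hc2).add hc3
    simpa [hB] using this
  have : Tendsto (fun q : ℝ × Eu n × Eu n => dist (H q.1 q.2.1 q.2.2) (H t₁ x₁ s₁))
      (nhdsWithin (t₁, x₁, s₁) S) (nhds 0) :=
    squeeze_zero' (Eventually.of_forall fun q => dist_nonneg) hev hB0
  exact tendsto_iff_dist_tendsto_zero.mpr this

end Hlem


lemma exists_ustar (n : ℕ) (Υ : ℝ) (hΥ : 0 < Υ) (H : ℝ → Eu n → Eu n → ℝ)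
    (t : ℝ) (x : Eu n) (s w : Eu n) (hw : ‖w‖ = 1)
    (hLip : ∀ s₁ s₂ : Eu n, |H t x s₁ - H t x s₂| ≤ Υ * (1 + ‖x‖) * ‖s₁ - s₂‖)
    (hbd : ∀ w' : Eu n, ‖w'‖ = 1 → |H t x w'| ≤ Υ * (1 + ‖x‖))
    (hhom : ∀ (s' : Eu n) (α : ℝ), 0 ≤ α → H t x (α • s') = α * H t x s') :
    ∃ u ∈ Pset n, ⟪s, fdyn n Υ H t x u (iE n w)⟫ ≤ H t x s := by
  set lam : ℝ := Υ * (1 + ‖x‖) with hlamdef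
  have hlam : 0 < lam := by positivity
  set rr : ℝ := ⟪s, w⟫ with hrrdef
  set q : Eu n := s - rr • w with hqdef
  set σ : ℝ := ‖q‖ with hσdef
  have hww : ⟪w, w⟫ = 1 := by
    rw [real_inner_self_eq_norm_mul_norm, hw]; norm_num
  have hqw : ⟪q, w⟫ = 0 := by
    rw [hqdef, inner_sub_left, real_inner_smul_left, hww, mul_one, ← hrrdef, sub_self]
  have hsq : ⟪s, q⟫ = σ ^ 2 := by
    have hs : s = q + rr • w := by rw [hqdef]; abel
    calc ⟪s, q⟫ = ⟪q + rr • w, q⟫ := by rw [← hs]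
      _ = ⟪q, q⟫ + rr * ⟪w, q⟫ := by rw [inner_add_left, real_inner_smul_left]
      _ = σ ^ 2 := by
            have hwq : ⟪w, q⟫ = 0 := by rw [real_inner_comm]; exact hqw
            rw [hwq, real_inner_self_eq_norm_mul_norm]; ring
  set hwv : ℝ := H t x w with hwvdef
  set hmw : ℝ := H t x (-w) with hmwdef
  have habs1 : |hwv| ≤ lam := hbd w hw
  have habs2 : |hmw| ≤ lam := hbd (-w) (by rw [norm_neg, hw])
  set a : ℝ := if 0 ≤ rr then hwv else max hwv (-hmw) with hadef
  have ha1 : hwv ≤ a := by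
    rw [hadef]; split_ifs; exacts [le_rfl, le_max_left _ _]
  have ha2 : a ≤ lam := by
    rw [hadef]; split_ifs
    · exact (abs_le.mp habs1).2
    · exact max_le (abs_le.mp habs1).2 (by linarith [(abs_le.mp habs2).1])
  have ha3 : -lam ≤ a := le_trans (by linarith [(abs_le.mp habs1).1]) ha1
  have hra : rr * a ≤ H t x (rr • w) := by
    by_cases hrr : 0 ≤ rr
    · rw [hadef, if_pos hrr, hhom w rr hrr]
    · push_neg at hrr
      have he : rr • w = (-rr) • (-w) := by rw [neg_smul, smul_neg, neg_neg]
      have h2 : H t x (rr • w) = (-rr) * hmw := by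
        rw [he, hhom (-w) (-rr) (by linarith)]
      have h3 : rr * a ≤ rr * (-hmw) := by
        rw [hadef, if_neg (not_le.mpr hrr)]
        exact mul_le_mul_of_nonpos_left (le_max_right _ _) hrr.le
      rw [h2]; nlinarith
  have hkey : rr * a - lam * σ ≤ H t x s := by
    have h1 := hLip s (rr • w)
    have h2 : ‖s - rr • w‖ = σ := rfl
    rw [h2] at h1
    have := (abs_le.mp h1).1
    linarith [hra]
  have hτ1 : 0 ≤ (a - hwv) / (2 * lam) := div_nonneg (by linarith) (by linarith)
  have hτ2 : (a - hwv) / (2 * lam) ≤ 1 := by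
    rw [div_le_one (by linarith)]; linarith [(abs_le.mp habs1).1]
  by_cases hσ0 : σ = 0
  · -- s = rr • w
    have hs0 : s = rr • w := by
      have : ‖s - rr • w‖ = 0 := hσ0
      rw [norm_eq_zero, sub_eq_zero] at this; exact this
    refine ⟨EuclideanSpace.single (Fin.last n) ((a - hwv) / (2 * lam)), ?_, ?_⟩
    · exact ⟨by rw [pE_single_last]; simp, by rw [single_last_last]; exact hτ1,
        by rw [single_last_last]; exact hτ2⟩
    · rw [fdyn_inner, pE_single_last, single_last_last]
      have hz : ⟪s, (0 : Eu n)⟫ = 0 := inner_zero_right s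
      have hz2 : ⟪(0 : Eu n), w⟫ = 0 := inner_zero_left w
      rw [hz, hz2]
      have harith : hwv + 2 * (Υ * (1 + ‖x‖)) * ((a - hwv) / (2 * lam)) = a := by
        rw [← hlamdef]; field_simp; ring
      rw [harith]
      have : H t x s = H t x (rr • w) := by rw [← hs0]
      rw [this]
      simpa [mul_comm] using hra
  · have hσpos : 0 < σ := lt_of_le_of_ne (norm_nonneg q) (Ne.symm hσ0)
    set z : Eu n := σ⁻¹ • q with hzdef
    have hzw : ⟪z, w⟫ = 0 := by rw [hzdef, real_inner_smul_left, hqw, mul_zero]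
    have hsz : ⟪s, z⟫ = σ := by
      rw [hzdef, real_inner_smul_right, hsq]
      field_simp
    set b : ℝ := min lam ((H t x s - rr * a) / σ) with hbdef
    have hble : b * σ ≤ H t x s - rr * a := by
      have h1 : b ≤ (H t x s - rr * a) / σ := min_le_right _ _
      calc b * σ ≤ ((H t x s - rr * a) / σ) * σ :=
            mul_le_mul_of_nonneg_right h1 hσpos.le
        _ = H t x s - rr * a := div_mul_cancel₀ _ hσ0
    have hbge : -lam ≤ b := by
      refine le_min (by linarith) ?_
      rw [le_div_iff₀ hσpos]
      linarith
    have hb2 : b ≤ lam := min_le_left _ _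
    set u : Eu (n+1) := iE n ((b / lam) • z) +
      EuclideanSpace.single (Fin.last n) ((a - hwv) / (2 * lam)) with hudef
    have hpu : pE n u = (b / lam) • z := by
      rw [hudef, map_add, pE_iE, pE_single_last, add_zero]
    have hul : u (Fin.last n) = (a - hwv) / (2 * lam) := by
      have h1 : u (Fin.last n) = iE n ((b / lam) • z) (Fin.last n)
          + (EuclideanSpace.single (Fin.last n) ((a - hwv) / (2 * lam))) (Fin.last n) := rfl
      rw [h1, iE_last, single_last_last, zero_add]
    have hnz : ‖z‖ = 1 := by
      rw [hzdef, norm_smul, Real.norm_eq_abs, abs_inv, abs_of_pos hσpos]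
      field_simp; exact hσdef.symm
    refine ⟨u, ⟨?_, ?_, ?_⟩, ?_⟩
    · rw [hpu, norm_smul, hnz, mul_one, Real.norm_eq_abs, abs_div, abs_of_pos hlam,
        div_le_one hlam]
      exact abs_le.mpr ⟨hbge, hb2⟩
    · rw [hul]; exact hτ1
    · rw [hul]; exact hτ2
    · rw [fdyn_inner, hpu, hul]
      have harith : hwv + 2 * (Υ * (1 + ‖x‖)) * ((a - hwv) / (2 * lam)) = a := by
        rw [← hlamdef]; field_simp; ring
      rw [harith]
      have h2 : ⟪s, (b / lam) • z⟫ = (b / lam) * σ := by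
        rw [real_inner_smul_right, hsz]
      have h3 : ⟪(b / lam) • z, w⟫ = 0 := by
        rw [real_inner_smul_left, hzw, mul_zero]
      rw [h2, h3]
      have h4 : Υ * (1 + ‖x‖) * ((b / lam) * σ - 0 * ⟪s, w⟫) = b * σ := by
        rw [← hlamdef]; field_simp; ring
      rw [h4]
      have : a * ⟪s, w⟫ = rr * a := by rw [← hrrdef]; ring
      rw [this]
      linarith


section L5
variable (t₀ ϑ₀ : ℝ) (n : ℕ) (Υ : ℝ) (H : ℝ → Eu n → Eu n → ℝ)

lemma fdyn_cont_u (t : ℝ) (x : Eu n) (v : Eu (n+1)) :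
    Continuous fun u => fdyn n Υ H t x u v := by
  unfold fdyn
  apply Continuous.add
  · exact (continuous_const.add (continuous_const.mul (cont_last n))).fun_smul continuous_const
  · exact continuous_const.fun_smul ((cont_pE n).sub
      ((Continuous.inner (𝕜 := ℝ) (cont_pE n) continuous_const).fun_smul continuous_const))

lemma fdyn_cont
    (HC : ContinuousOn (fun q : ℝ × Eu n × Eu n => H q.1 q.2.1 q.2.2)
      ((Icc t₀ ϑ₀) ×ˢ (univ : Set (Eu n)) ×ˢ (univ : Set (Eu n)))) :
    ContinuousOn
      (fun p : ℝ × Eu n × Eu (n+1) × Eu (n+1) => fdyn n Υ H p.1 p.2.1 p.2.2.1 p.2.2.2)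
      (Icc t₀ ϑ₀ ×ˢ (univ : Set (Eu n)) ×ˢ Pset n ×ˢ Qset n) := by
  have c_x : Continuous fun p : ℝ × Eu n × Eu (n+1) × Eu (n+1) => p.2.1 :=
    continuous_fst.comp continuous_snd
  have c_u : Continuous fun p : ℝ × Eu n × Eu (n+1) × Eu (n+1) => p.2.2.1 :=
    continuous_fst.comp (continuous_snd.comp continuous_snd)
  have c_v : Continuous fun p : ℝ × Eu n × Eu (n+1) × Eu (n+1) => p.2.2.2 :=
    continuous_snd.comp (continuous_snd.comp continuous_snd)
  have c1 : ContinuousOn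
      (fun p : ℝ × Eu n × Eu (n+1) × Eu (n+1) => H p.1 p.2.1 (pE n p.2.2.2))
      (Icc t₀ ϑ₀ ×ˢ (univ : Set (Eu n)) ×ˢ Pset n ×ˢ Qset n) := by
    exact HC.comp
      (Continuous.continuousOn
        (continuous_fst.prodMk (c_x.prodMk ((cont_pE n).comp c_v))))
      (fun p hp => ⟨hp.1, mem_univ _, mem_univ _⟩)
  unfold fdyn
  apply ContinuousOn.add
  · apply ContinuousOn.fun_smul
    · exact c1.add (Continuous.continuousOn
        ((continuous_const.mul (continuous_const.mul
          (continuous_const.add c_x.norm))).mul ((cont_last n).comp c_u)))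
    · exact ((cont_pE n).comp c_v).continuousOn
  · apply ContinuousOn.fun_smul
    · exact Continuous.continuousOn (continuous_const.mul (continuous_const.add c_x.norm))
    · exact Continuous.continuousOn (((cont_pE n).comp c_u).sub
        ((Continuous.inner (𝕜 := ℝ) ((cont_pE n).comp c_u) ((cont_pE n).comp c_v)).fun_smul
          ((cont_pE n).comp c_v)))

lemma fdyn_lip (LA : ℝ) (hΥ : 0 < Υ) (t : ℝ) (x' x'' : Eu n) (u : Eu (n+1)) (w : Eu n)
    (hu : u ∈ Pset n) (hw : ‖w‖ = 1)
    (hHd : |H t x' w - H t x'' w| ≤ LA * ‖x' - x''‖) :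
    ‖fdyn n Υ H t x' u (iE n w) - fdyn n Υ H t x'' u (iE n w)‖
      ≤ (LA + 4 * Υ) * ‖x' - x''‖ := by
  obtain ⟨hu1, hu2, hu3⟩ := hu
  set τ : ℝ := u (Fin.last n)
  set g : Eu n := pE n u - ⟪pE n u, w⟫ • w with hgdef
  have hng : ‖g‖ ≤ 2 := by
    rw [hgdef]
    calc ‖pE n u - ⟪pE n u, w⟫ • w‖ ≤ ‖pE n u‖ + ‖⟪pE n u, w⟫ • w‖ := norm_sub_le _ _
      _ ≤ 1 + 1 := by
          refine add_le_add hu1 ?_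
          rw [norm_smul, hw, mul_one, Real.norm_eq_abs]
          calc |⟪pE n u, w⟫| ≤ ‖pE n u‖ * ‖w‖ := abs_real_inner_le_norm _ _
            _ ≤ 1 := by rw [hw, mul_one]; exact hu1
      _ = 2 := by norm_num
  have hdiff : fdyn n Υ H t x' u (iE n w) - fdyn n Υ H t x'' u (iE n w)
      = ((H t x' w + 2 * (Υ * (1 + ‖x'‖)) * τ) - (H t x'' w + 2 * (Υ * (1 + ‖x''‖)) * τ)) • w
        + ((Υ * (1 + ‖x'‖)) - (Υ * (1 + ‖x''‖))) • g := by
    unfold fdyn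
    rw [pE_iE, hgdef]
    module
  rw [hdiff]
  have hnn : |‖x'‖ - ‖x''‖| ≤ ‖x' - x''‖ := abs_norm_sub_norm_le _ _
  calc ‖_ + _‖ ≤ ‖((H t x' w + 2 * (Υ * (1 + ‖x'‖)) * τ) - (H t x'' w + 2 * (Υ * (1 + ‖x''‖)) * τ)) • w‖
        + ‖((Υ * (1 + ‖x'‖)) - (Υ * (1 + ‖x''‖))) • g‖ := norm_add_le _ _
    _ ≤ (LA * ‖x' - x''‖ + 2 * Υ * ‖x' - x''‖) * 1 + (Υ * ‖x' - x''‖) * 2 := by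
        refine add_le_add ?_ ?_
        · rw [norm_smul, hw, Real.norm_eq_abs]
          refine mul_le_mul_of_nonneg_right ?_ zero_le_one |>.trans (le_of_eq (mul_one _)) |>.trans (le_of_eq (mul_one _).symm)
          calc |(H t x' w + 2 * (Υ * (1 + ‖x'‖)) * τ) - (H t x'' w + 2 * (Υ * (1 + ‖x''‖)) * τ)|
              = |(H t x' w - H t x'' w) + 2 * Υ * τ * (‖x'‖ - ‖x''‖)| := by ring_nf
            _ ≤ |H t x' w - H t x'' w| + |2 * Υ * τ * (‖x'‖ - ‖x''‖)| := abs_add_le _ _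
            _ ≤ LA * ‖x' - x''‖ + 2 * Υ * ‖x' - x''‖ := by
                refine add_le_add hHd ?_
                rw [abs_mul]
                have h1 : |2 * Υ * τ| ≤ 2 * Υ := by
                  rw [abs_mul, abs_mul]
                  simp only [abs_two, abs_of_pos hΥ]
                  nlinarith [abs_of_nonneg hu2, hu3, hu2]
                exact mul_le_mul h1 hnn (abs_nonneg _) (by positivity)
        · rw [norm_smul, Real.norm_eq_abs]
          refine mul_le_mul ?_ hng (norm_nonneg _) (by positivity)
          have : (Υ * (1 + ‖x'‖)) - (Υ * (1 + ‖x''‖)) = Υ * (‖x'‖ - ‖x''‖) := by ring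
          rw [this, abs_mul, abs_of_pos hΥ]
          exact mul_le_mul_of_nonneg_left hnn hΥ.le
    _ = (LA + 4 * Υ) * ‖x' - x''‖ := by ring

lemma fdyn_growth (hΥ : 0 < Υ) (t : ℝ) (x : Eu n) (u : Eu (n+1)) (w : Eu n)
    (hu : u ∈ Pset n) (hw : ‖w‖ = 1) (hbd : |H t x w| ≤ Υ * (1 + ‖x‖)) :
    ‖fdyn n Υ H t x u (iE n w)‖ ≤ 5 * Υ * (1 + ‖x‖) := by
  obtain ⟨hu1, hu2, hu3⟩ := hu
  have hlam : (0:ℝ) < Υ * (1 + ‖x‖) := by positivity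
  have hng : ‖pE n u - ⟪pE n u, w⟫ • w‖ ≤ 2 := by
    calc ‖pE n u - ⟪pE n u, w⟫ • w‖ ≤ ‖pE n u‖ + ‖⟪pE n u, w⟫ • w‖ := norm_sub_le _ _
      _ ≤ 1 + 1 := by
          refine add_le_add hu1 ?_
          rw [norm_smul, hw, mul_one, Real.norm_eq_abs]
          calc |⟪pE n u, w⟫| ≤ ‖pE n u‖ * ‖w‖ := abs_real_inner_le_norm _ _
            _ ≤ 1 := by rw [hw, mul_one]; exact hu1
      _ = 2 := by norm_num
  unfold fdyn
  rw [pE_iE]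
  calc ‖(H t x w + 2 * (Υ * (1 + ‖x‖)) * u (Fin.last n)) • w
        + (Υ * (1 + ‖x‖)) • (pE n u - ⟪pE n u, w⟫ • w)‖
      ≤ ‖(H t x w + 2 * (Υ * (1 + ‖x‖)) * u (Fin.last n)) • w‖
        + ‖(Υ * (1 + ‖x‖)) • (pE n u - ⟪pE n u, w⟫ • w)‖ := norm_add_le _ _
    _ ≤ 3 * (Υ * (1 + ‖x‖)) * 1 + (Υ * (1 + ‖x‖)) * 2 := by
        refine add_le_add ?_ ?_
        · rw [norm_smul, hw, mul_one, Real.norm_eq_abs, mul_one]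
          calc |H t x w + 2 * (Υ * (1 + ‖x‖)) * u (Fin.last n)|
              ≤ |H t x w| + |2 * (Υ * (1 + ‖x‖)) * u (Fin.last n)| := abs_add_le _ _
            _ ≤ Υ * (1 + ‖x‖) + 2 * (Υ * (1 + ‖x‖)) := by
                refine add_le_add hbd ?_
                rw [abs_mul, abs_mul, abs_two, abs_of_pos hlam, abs_of_nonneg hu2]
                nlinarith
            _ = 3 * (Υ * (1 + ‖x‖)) := by ring
        · rw [norm_smul, Real.norm_eq_abs, abs_of_pos hlam]
          exact mul_le_mul_of_nonneg_left hng hlam.le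
    _ = 5 * Υ * (1 + ‖x‖) := by ring

lemma least_at (hΥ : 0 < Υ) (t : ℝ) (x s : Eu n) (hs : s ≠ 0)
    (hzeroP : (0 : Eu (n+1)) ∈ Pset n)
    (hhom : ∀ (s' : Eu n) (α : ℝ), 0 ≤ α → H t x (α • s') = α * H t x s') :
    IsLeast ((fun u => ⟪s, fdyn n Υ H t x u (iE n (‖s‖⁻¹ • s))⟫) '' Pset n) (H t x s) := by
  have hns : (0:ℝ) < ‖s‖ := norm_pos_iff.mpr hs
  set sh : Eu n := ‖s‖⁻¹ • s with hshdef
  have hssh : ⟪s, sh⟫ = ‖s‖ := by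
    rw [hshdef, real_inner_smul_right, real_inner_self_eq_norm_mul_norm]
    field_simp
  have hHs : H t x s = H t x sh * ‖s‖ := by
    have h1 : (‖s‖ : ℝ) • sh = s := by
      rw [hshdef, smul_smul, mul_inv_cancel₀ (ne_of_gt hns), one_smul]
    have h2 := hhom sh ‖s‖ hns.le
    rw [h1] at h2
    rw [h2]; ring
  have hval : ∀ u : Eu (n+1), ⟪s, fdyn n Υ H t x u (iE n sh)⟫
      = (H t x sh + 2 * (Υ * (1 + ‖x‖)) * u (Fin.last n)) * ‖s‖ := by
    intro u
    rw [fdyn_inner, hssh]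
    have h2 : ⟪pE n u, sh⟫ = ‖s‖⁻¹ * ⟪pE n u, s⟫ := by
      rw [hshdef, real_inner_smul_right]
    have h3 : ⟪s, pE n u⟫ - ⟪pE n u, sh⟫ * ‖s‖ = 0 := by
      rw [h2, real_inner_comm s (pE n u)]
      field_simp; ring
    rw [h3, mul_zero, add_zero]
  constructor
  · refine ⟨0, hzeroP, ?_⟩
    show ⟪s, fdyn n Υ H t x 0 (iE n sh)⟫ = H t x s
    rw [hval 0]
    have h0 : (0 : Eu (n+1)) (Fin.last n) = 0 := rfl
    rw [h0, hHs]; ring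
  · rintro y ⟨u, hu, rfl⟩
    show H t x s ≤ ⟪s, fdyn n Υ H t x u (iE n sh)⟫
    rw [hval u, hHs]
    have : (0:ℝ) ≤ 2 * (Υ * (1 + ‖x‖)) * u (Fin.last n) * ‖s‖ := by
      have := hu.2.1
      positivity
    nlinarith

end L5


/-- Every Hamiltonian satisfying H1–H3 is the maxmin Hamiltonian of some
differential game: there are compact control sets P, Q and a dynamics f
satisfying F1–F3 with H(t,x,s) = max_{v ∈ Q} min_{u ∈ P} ⟨s, f(t,x,u,v)⟩,
the maxima and minima being attained. -/
theorem hamiltonian_is_maxmin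
    (t₀ ϑ₀ : ℝ) (ht : t₀ < ϑ₀) (n : ℕ) (hn : 1 ≤ n) (Υ : ℝ) (hΥ : 0 < Υ)
    (H : ℝ → Eu n → Eu n → ℝ) (hH : SatisfiesH t₀ ϑ₀ n Υ H) :
    ∃ m : ℕ, 0 < m ∧ ∃ P Q : Set (Eu m), P.Nonempty ∧ Q.Nonempty ∧
      IsCompact P ∧ IsCompact Q ∧ ∃ f : ℝ → Eu n → Eu m → Eu m → Eu n,
        SatisfiesF t₀ ϑ₀ n m P Q f ∧
        ∀ t ∈ Icc t₀ ϑ₀, ∀ x s : Eu n,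
          (∀ v ∈ Q, ∃ r : ℝ, IsLeast ((fun u => ⟪s, f t x u v⟫) '' P) r) ∧
          IsGreatest {r : ℝ | ∃ v ∈ Q,
            IsLeast ((fun u => ⟪s, f t x u v⟫) '' P) r} (H t x s) := by
  obtain ⟨hH1, hH2, hH3⟩ := hH
  have HC := H_cont t₀ ϑ₀ n Υ H hH2 hΥ
  have hLipAll := H_lip t₀ ϑ₀ n Υ H hH2 hΥ
  refine ⟨n + 1, Nat.succ_pos n, Pset n, Qset n, ⟨0, zero_mem_P n⟩, Q_nonempty n hn,
    isCompact_P n, isCompact_Q n, fdyn n Υ H, ⟨?_, ?_, ?_⟩, ?_⟩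
  · -- F1
    exact fdyn_cont t₀ ϑ₀ n Υ H HC
  · -- F2
    intro A hA
    obtain ⟨ω, L, hω, hL, hb⟩ := hH2 A hA
    refine ⟨L + 4 * Υ, by positivity, ?_⟩
    intro t htt x' hx' x'' hx'' u hu v hv
    obtain ⟨w, hwsph, rfl⟩ := hv
    have hw : ‖w‖ = 1 := by simpa using hwsph
    have hHd : |H t x' w - H t x'' w| ≤ L * ‖x' - x''‖ := by
      have := hb 1 one_pos t htt t htt x' hx' x'' hx'' w w (le_of_eq hw) (le_of_eq hw)
      rw [sub_self, omega_zero ω hω, sub_self, norm_zero] at this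
      rw [mul_one] at this
      linarith [this]
    exact fdyn_lip n Υ H L hΥ t x' x'' u w hu hw hHd
  · -- F3
    refine ⟨5 * Υ, by positivity, ?_⟩
    intro t htt x u hu v hv
    obtain ⟨w, hwsph, rfl⟩ := hv
    have hw : ‖w‖ = 1 := by simpa using hwsph
    have hbd : |H t x w| ≤ Υ * (1 + ‖x‖) := by
      have := hH1 t htt x w
      rw [hw, mul_one] at this
      exact this
    exact fdyn_growth n Υ H hΥ t x u w hu hw hbd
  · -- maxmin
    intro t htt x s
    have hLip : ∀ s₁ s₂ : Eu n, |H t x s₁ - H t x s₂| ≤ Υ * (1 + ‖x‖) * ‖s₁ - s₂‖ :=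
      fun s₁ s₂ => hLipAll t htt x s₁ s₂
    have hbd : ∀ w' : Eu n, ‖w'‖ = 1 → |H t x w'| ≤ Υ * (1 + ‖x‖) := by
      intro w' hw'
      have := hH1 t htt x w'
      rw [hw', mul_one] at this
      exact this
    have hhom : ∀ (s' : Eu n) (α : ℝ), 0 ≤ α → H t x (α • s') = α * H t x s' :=
      fun s' α hα => hH3 t htt x s' α hα
    have hH0 : H t x 0 = 0 := by
      have := hH1 t htt x 0
      rw [norm_zero, mul_zero, zero_mul] at this
      have h2 := abs_nonneg (H t x 0)
      have : |H t x 0| = 0 := le_antisymm this h2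
      exact abs_eq_zero.mp this
    constructor
    · -- min attained for every v ∈ Q
      intro v hv
      have hcont : Continuous fun u => ⟪s, fdyn n Υ H t x u v⟫ :=
        Continuous.inner continuous_const (fdyn_cont_u n Υ H t x v)
      obtain ⟨u₁, hu₁, hmin⟩ := (isCompact_P n).exists_isMinOn ⟨0, zero_mem_P n⟩
        hcont.continuousOn
      exact ⟨_, ⟨u₁, hu₁, rfl⟩, by rintro y ⟨u₂, hu₂, rfl⟩; exact hmin hu₂⟩
    · constructor
      · -- H t x s is attained
        by_cases hs : s = 0
        · obtain ⟨v₀, hv₀⟩ := Q_nonempty n hn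
          refine ⟨v₀, hv₀, ?_⟩
          rw [hs, hH0]
          constructor
          · exact ⟨0, zero_mem_P n, by simp⟩
          · rintro y ⟨u, hu, rfl⟩
            simp
        · refine ⟨iE n (‖s‖⁻¹ • s), ⟨‖s‖⁻¹ • s, ?_, rfl⟩, ?_⟩
          · have hns : (0:ℝ) < ‖s‖ := norm_pos_iff.mpr hs
            simp [norm_smul, abs_of_pos (inv_pos.mpr hns), inv_mul_cancel₀ (ne_of_gt hns)]
          · exact least_at n Υ H hΥ t x s hs (zero_mem_P n) hhom
      · -- upper bound
        rintro r ⟨v, hv, hle⟩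
        obtain ⟨w, hwsph, rfl⟩ := hv
        have hw : ‖w‖ = 1 := by simpa using hwsph
        obtain ⟨u', hu'P, hval⟩ := exists_ustar n Υ hΥ H t x s w hw hLip hbd hhom
        exact le_trans (hle.2 ⟨u', hu'P, rfl⟩) hval
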